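/- For ψ, ν, χ ∈ ℝ let h(ψ,ν,χ) be the 2×2 complex matrix [[e^χ cosh ψ, sinh ψ + iν e^χ cosh ψ],[sinh ψ − iν e^χ cosh ψ, (e^{−χ} + ν² e^χ) cosh ψ]], and let ω = [[0,1],[1,0]]. Then h(ψ,ν,χ) is Hermitian with det h(ψ,ν,χ) = 1 and tr h(ψ,ν,χ) > 0 (so h(ψ,ν,χ) ∈ H₃⁺), and tr(ω · h(ψ,ν,χ)) = 2 sinh ψ. Consequently the map h ↦ tr(ω h) from H₃⁺ to ℝ is surjective. -/
import Mathlib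


open Matrix

/-- The parametrization `h(ψ,ν,χ) = c(ν,χ) h_ψ c(ν,χ)†` of `H₃⁺`. -/
noncomputable def hmat (ψ ν χ : ℝ) : Matrix (Fin 2) (Fin 2) ℂ :=
  !![(Real.exp χ : ℂ) * (Real.cosh ψ : ℂ),
     (Real.sinh ψ : ℂ) + Complex.I * (ν : ℂ) * (Real.exp χ : ℂ) * (Real.cosh ψ : ℂ);
     (Real.sinh ψ : ℂ) - Complex.I * (ν : ℂ) * (Real.exp χ : ℂ) * (Real.cosh ψ : ℂ),
     ((Real.exp (-χ) : ℂ) + (ν : ℂ) ^ 2 * (Real.exp χ : ℂ)) * (Real.cosh ψ : ℂ)]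

/-- Every `h(ψ,ν,χ)` lies in `H₃⁺` and satisfies
`tr(ω h(ψ,ν,χ)) = 2 sinh ψ` with `ω = [[0,1],[1,0]]`; consequently
`h ↦ tr(ω h)` maps `H₃⁺` onto `ℝ`. -/
theorem stmt_14 :
    (∀ ψ ν χ : ℝ,
      (hmat ψ ν χ).IsHermitian ∧ (hmat ψ ν χ).det = 1 ∧
        0 < (hmat ψ ν χ).trace.re ∧ (hmat ψ ν χ).trace.im = 0 ∧
        (!![(0 : ℂ), 1; 1, 0] * hmat ψ ν χ).trace = ((2 * Real.sinh ψ : ℝ) : ℂ)) ∧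
    (∀ c : ℝ, ∃ h : Matrix (Fin 2) (Fin 2) ℂ,
      h.IsHermitian ∧ h.det = 1 ∧ 0 < h.trace.re ∧
        (!![(0 : ℂ), 1; 1, 0] * h).trace = (c : ℂ)) := by
  have main : ∀ ψ ν χ : ℝ,
      (hmat ψ ν χ).IsHermitian ∧ (hmat ψ ν χ).det = 1 ∧
        0 < (hmat ψ ν χ).trace.re ∧ (hmat ψ ν χ).trace.im = 0 ∧
        (!![(0 : ℂ), 1; 1, 0] * hmat ψ ν χ).trace = ((2 * Real.sinh ψ : ℝ) : ℂ) := by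
    intro ψ ν χ
    have him : (Complex.exp (-(χ:ℂ))).im = 0 := by
      rw [← Complex.ofReal_neg, ← Complex.ofReal_exp]
      exact Complex.ofReal_im _
    refine ⟨?_, ?_, ?_, ?_, ?_⟩
    · unfold Matrix.IsHermitian
      ext i j
      fin_cases i <;> fin_cases j <;>
        simp [hmat, conjTranspose_apply, Complex.ext_iff, him]
    · have h1 : (Real.exp χ : ℂ) * (Real.exp (-χ) : ℂ) = 1 := by
        rw [← Complex.ofReal_mul, ← Real.exp_add]; simp
      have h2 : (Real.cosh ψ : ℂ)^2 - (Real.sinh ψ : ℂ)^2 = 1 := by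
        have := Real.cosh_sq_sub_sinh_sq ψ
        push_cast [← this]; ring_nf
        rw [Complex.cosh_sq_sub_sinh_sq]
      unfold hmat
      rw [det_fin_two_of]
      linear_combination (Real.cosh ψ:ℂ)^2 * h1 + h2 +
        ((ν:ℂ)*(Real.exp χ:ℂ)*(Real.cosh ψ:ℂ))^2 * Complex.I_sq
    · have htr : (hmat ψ ν χ).trace
          = (((Real.exp χ + Real.exp (-χ) + ν^2 * Real.exp χ) * Real.cosh ψ : ℝ) : ℂ) := by
        rw [Matrix.trace_fin_two]
        unfold hmat
        simp only [cons_val', cons_val_zero, cons_val_one, head_cons, empty_val',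
          cons_val_fin_one, of_apply, vecHead, vecTail]
        push_cast; ring
      rw [htr, Complex.ofReal_re]
      have hc := Real.cosh_pos ψ
      have h0 : 0 < Real.exp χ + Real.exp (-χ) + ν^2 * Real.exp χ := by positivity
      exact mul_pos h0 hc
    · rw [Matrix.trace_fin_two]
      unfold hmat
      have hν : ((ν:ℂ)^2).im = 0 := by
        rw [← Complex.ofReal_pow]; exact Complex.ofReal_im _
      simp [him, hν, Complex.add_im, Complex.mul_im]
    · unfold hmat
      rw [Matrix.trace_fin_two]
      simp [Matrix.mul_apply, Fin.sum_univ_two]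
      ring
  refine ⟨main, fun c => ?_⟩
  refine ⟨hmat (Real.arsinh (c/2)) 0 0, (main _ 0 0).1, (main _ 0 0).2.1,
    (main _ 0 0).2.2.1, ?_⟩
  rw [(main _ 0 0).2.2.2.2, Real.sinh_arsinh]
  push_cast
  ring
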